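/- Let a : ℕ → ℝ with ∑ₙ aₙ² = ∞, let P₋ := ⨂_{n∈ℕ} gaussianReal(0, 1) on Ω = (ℕ → ℝ), let π₀ ∈ (0,1) be a prior, and define the posterior belief process πₙ(ω) := π₀·exp(Sₙ(ω)) / (π₀·exp(Sₙ(ω)) + (1 − π₀)), where Sₙ(ω) := ∑_{i<n} (aᵢ·ωᵢ − aᵢ²/2). Then πₙ → 0 P₋-almost surely. (The Bayesian belief in 'change' converges almost surely to 0 under the true status quo measure: W_b({π^{b̄}_{T_B} = 0}) = 1.) -/

import Mathlib

open MeasureTheory ProbabilityTheory Filter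

open scoped ENNReal NNReal

namespace PosteriorAuxG

lemma pdf_shift (c x : ℝ) :
    Real.exp (c * x) * gaussianPDFReal 0 1 x
      = Real.exp (c ^ 2 / 2) * gaussianPDFReal c 1 x := by
  simp only [gaussianPDFReal, NNReal.coe_one, mul_one, sub_zero]
  rw [mul_left_comm, mul_left_comm (Real.exp (c ^ 2 / 2)), ← Real.exp_add, ← Real.exp_add]
  ring_nf

lemma integrable_exp_gaussian (c : ℝ) :
    Integrable (fun x => Real.exp (c * x)) (gaussianReal 0 1) := by
  rw [gaussianReal_of_var_ne_zero 0 one_ne_zero]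
  rw [show gaussianPDF 0 1 = fun x => ((gaussianPDFReal 0 1 x).toNNReal : ℝ≥0∞) from rfl]
  rw [integrable_withDensity_iff_integrable_smul
    (measurable_gaussianPDFReal 0 1).real_toNNReal]
  have : (fun x => ((gaussianPDFReal 0 1 x).toNNReal : ℝ≥0) • Real.exp (c * x))
      = fun x => Real.exp (c ^ 2 / 2) * gaussianPDFReal c 1 x := by
    funext x
    rw [NNReal.smul_def, Real.coe_toNNReal _ (gaussianPDFReal_nonneg 0 1 x), smul_eq_mul,
      mul_comm, pdf_shift]
  rw [this]
  exact (integrable_gaussianPDFReal c 1).const_mul _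

lemma integral_exp_gaussian (c : ℝ) :
    ∫ x, Real.exp (c * x) ∂(gaussianReal 0 1) = Real.exp (c ^ 2 / 2) := by
  rw [gaussianReal_of_var_ne_zero 0 one_ne_zero]
  rw [show gaussianPDF 0 1 = fun x => ((gaussianPDFReal 0 1 x).toNNReal : ℝ≥0∞) from rfl]
  rw [integral_withDensity_eq_integral_smul (measurable_gaussianPDFReal 0 1).real_toNNReal]
  have : (fun x => ((gaussianPDFReal 0 1 x).toNNReal : ℝ≥0) • Real.exp (c * x))
      = fun x => Real.exp (c ^ 2 / 2) * gaussianPDFReal c 1 x := by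
    funext x
    rw [NNReal.smul_def, Real.coe_toNNReal _ (gaussianPDFReal_nonneg 0 1 x), smul_eq_mul,
      mul_comm, pdf_shift]
  rw [this, integral_const_mul, integral_gaussianPDFReal_eq_one c one_ne_zero, mul_one]

end PosteriorAuxG

namespace PosteriorAuxG

lemma pi_exp_integrable (n : ℕ) (c : Fin n → ℝ) :
    Integrable (fun x : Fin n → ℝ => Real.exp (∑ i, c i * x i))
      (Measure.pi fun _ => gaussianReal 0 1) := by
  letI : MeasureSpace ℝ := { volume := gaussianReal 0 1 }
  haveI : SigmaFinite (volume : Measure ℝ) :=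
    (inferInstance : SigmaFinite (gaussianReal 0 1))
  have h : (Measure.pi fun _ : Fin n => gaussianReal 0 1)
      = (volume : Measure (Fin n → ℝ)) := rfl
  rw [h]
  have : (fun x : Fin n → ℝ => Real.exp (∑ i, c i * x i))
      = fun x : Fin n → ℝ => ∏ i, Real.exp (c i * x i) := by
    funext x; rw [Real.exp_sum]
  rw [this]
  exact Integrable.fintype_prod fun i => integrable_exp_gaussian (c i)

lemma pi_exp_integral (n : ℕ) (c : Fin n → ℝ) :
    ∫ x : Fin n → ℝ, Real.exp (∑ i, c i * x i) ∂(Measure.pi fun _ => gaussianReal 0 1)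
      = Real.exp (∑ i, (c i) ^ 2 / 2) := by
  letI : MeasureSpace ℝ := { volume := gaussianReal 0 1 }
  haveI : SigmaFinite (volume : Measure ℝ) :=
    (inferInstance : SigmaFinite (gaussianReal 0 1))
  have h : (Measure.pi fun _ : Fin n => gaussianReal 0 1)
      = (volume : Measure (Fin n → ℝ)) := rfl
  rw [h]
  have h2 : (fun x : Fin n → ℝ => Real.exp (∑ i, c i * x i))
      = fun x : Fin n → ℝ => ∏ i, Real.exp (c i * x i) := by
    funext x; rw [Real.exp_sum]
  rw [h2, Real.exp_sum]
  rw [← h, integral_fintype_prod_eq_prod (f := fun (i : Fin n) (x : ℝ) => Real.exp (c i * x))]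
  exact Finset.prod_congr rfl fun i _ => integral_exp_gaussian (c i)

end PosteriorAuxG

namespace PosteriorAuxG

noncomputable def Tf (a : ℕ → ℝ) (n : ℕ) (ω : ℕ → ℝ) : ℝ :=
  ∑ i ∈ Finset.range n, (a i * ω i - (a i) ^ 2 / 2)

lemma measurable_proj (n : ℕ) : Measurable (fun ω : ℕ → ℝ => fun i : Fin n => ω i) :=
  measurable_pi_lambda _ fun i => measurable_pi_apply _

lemma exp_T_eq (a : ℕ → ℝ) (t : ℝ) (n : ℕ) (ω : ℕ → ℝ) :
    Real.exp (t * Tf a n ω)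
      = Real.exp (-(t * ∑ i ∈ Finset.range n, (a i) ^ 2) / 2)
        * Real.exp (∑ i : Fin n, (t * a (i : ℕ)) * ω (i : ℕ)) := by
  rw [← Real.exp_add]
  congr 1
  rw [Fin.sum_univ_eq_sum_range (fun i => (t * a i) * ω i) n]
  calc t * Tf a n ω
      = ∑ i ∈ Finset.range n, (t * a i * ω i - t * (a i ^ 2) / 2) := by
        rw [Tf, Finset.mul_sum]
        exact Finset.sum_congr rfl fun i _ => by ring
    _ = (∑ i ∈ Finset.range n, t * a i * ω i) - ∑ i ∈ Finset.range n, t * (a i ^ 2) / 2 :=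
        Finset.sum_sub_distrib _ _
    _ = -(t * ∑ i ∈ Finset.range n, (a i) ^ 2) / 2 + ∑ i ∈ Finset.range n, t * a i * ω i := by
        rw [← Finset.sum_div, ← Finset.mul_sum]
        ring

lemma measurable_expsum (n : ℕ) (c : Fin n → ℝ) :
    Measurable (fun x : Fin n → ℝ => Real.exp (∑ i, c i * x i)) := by
  fun_prop

variable (a : ℕ → ℝ) (Pm : Measure (ℕ → ℝ)) [IsProbabilityMeasure Pm]
  (hPm : ∀ n : ℕ, Measure.map (fun ω (i : Fin n) => ω i) Pm =
      Measure.pi fun _ : Fin n => gaussianReal 0 1)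

include hPm

lemma integrable_exp_T (t : ℝ) (n : ℕ) :
    Integrable (fun ω => Real.exp (t * Tf a n ω)) Pm := by
  have h1 : Integrable (fun x : Fin n → ℝ => Real.exp (∑ i : Fin n, (t * a (i : ℕ)) * x i))
      (Pm.map (fun ω (i : Fin n) => ω i)) := by
    rw [hPm n]; exact pi_exp_integrable n _
  have h2 := (integrable_map_measure (measurable_expsum n _).aestronglyMeasurable
    (measurable_proj n).aemeasurable).mp h1
  have h3 := h2.const_mul (Real.exp (-(t * ∑ i ∈ Finset.range n, (a i) ^ 2) / 2))
  refine h3.congr (Eventually.of_forall fun ω => ?_)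
  exact (exp_T_eq a t n ω).symm

lemma integral_exp_T (t : ℝ) (n : ℕ) :
    ∫ ω, Real.exp (t * Tf a n ω) ∂Pm
      = Real.exp ((t ^ 2 - t) * (∑ i ∈ Finset.range n, (a i) ^ 2) / 2) := by
  simp_rw [exp_T_eq a t n]
  rw [integral_const_mul]
  have h1 : ∫ ω, Real.exp (∑ i : Fin n, (t * a (i : ℕ)) * ω (i : ℕ)) ∂Pm
      = ∫ x : Fin n → ℝ, Real.exp (∑ i : Fin n, (t * a (i : ℕ)) * x i)
          ∂(Measure.pi fun _ : Fin n => gaussianReal 0 1) := by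
    rw [← hPm n, integral_map (measurable_proj n).aemeasurable
      (measurable_expsum n _).aestronglyMeasurable]
  rw [h1, pi_exp_integral, ← Real.exp_add]
  congr 1
  have h2 : ∑ i : Fin n, (t * a (i : ℕ)) ^ 2 / 2
      = ∑ i ∈ Finset.range n, t ^ 2 * (a i) ^ 2 / 2 := by
    rw [Fin.sum_univ_eq_sum_range (fun i => (t * a i) ^ 2 / 2) n]
    exact Finset.sum_congr rfl fun i _ => by ring
  rw [h2]
  calc -(t * ∑ i ∈ Finset.range n, a i ^ 2) / 2 + ∑ i ∈ Finset.range n, t ^ 2 * a i ^ 2 / 2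
      = -(t * ∑ i ∈ Finset.range n, a i ^ 2) / 2
        + t ^ 2 * (∑ i ∈ Finset.range n, a i ^ 2) / 2 := by
        rw [← Finset.sum_div, ← Finset.mul_sum]
    _ = (t ^ 2 - t) * (∑ i ∈ Finset.range n, a i ^ 2) / 2 := by ring


lemma map_eval (n : ℕ) : Pm.map (fun ω : ℕ → ℝ => ω n) = gaussianReal 0 1 := by
  have hcomp : (fun ω : ℕ → ℝ => ω n)
      = (fun x : Fin (n + 1) → ℝ => x (Fin.last n)) ∘ (fun ω (i : Fin (n + 1)) => ω i) := by
    funext ω; simp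
  rw [hcomp, ← Measure.map_map (measurable_pi_apply _) (measurable_proj (n + 1)), hPm (n + 1)]
  have he := (measurePreserving_piFinSuccAbove
    (fun _ : Fin (n + 1) => gaussianReal 0 1) (Fin.last n)).map_eq
  have hfst : (fun x : Fin (n + 1) → ℝ => x (Fin.last n))
      = Prod.fst ∘ (MeasurableEquiv.piFinSuccAbove (fun _ : Fin (n + 1) => ℝ) (Fin.last n)) := by
    funext x; rfl
  rw [hfst, ← Measure.map_map measurable_fst (MeasurableEquiv.measurable _), he,
    Measure.map_fst_prod]
  simp

lemma indep_proj_eval (n : ℕ) :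
    IndepFun (fun ω : ℕ → ℝ => fun i : Fin n => ω i) (fun ω : ℕ → ℝ => ω n) Pm := by
  rw [indepFun_iff_map_prod_eq_prod_map_map (measurable_proj n).aemeasurable
    (measurable_pi_apply n).aemeasurable]
  rw [hPm n, map_eval Pm hPm n]
  set e := MeasurableEquiv.piFinSuccAbove (fun _ : Fin (n + 1) => ℝ) (Fin.last n) with he_def
  have hcomp : (fun ω : ℕ → ℝ => ((fun i : Fin n => ω i), ω n))
      = (Prod.swap ∘ e) ∘ (fun ω (i : Fin (n + 1)) => ω i) := by
    funext ω
    refine Prod.ext ?_ ?_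
    · funext i
      simp [he_def, MeasurableEquiv.piFinSuccAbove, Fin.insertNthEquiv, Fin.init]
    · simp [he_def, MeasurableEquiv.piFinSuccAbove, Fin.insertNthEquiv, Fin.init]
  rw [hcomp, ← Measure.map_map (measurable_swap.comp (MeasurableEquiv.measurable e))
    (measurable_proj (n + 1)), hPm (n + 1),
    ← Measure.map_map measurable_swap (MeasurableEquiv.measurable e),
    (measurePreserving_piFinSuccAbove (fun _ : Fin (n + 1) => gaussianReal 0 1)
      (Fin.last n)).map_eq,
    Measure.prod_swap]


lemma integrable_exp_eval (c d : ℝ) (n : ℕ) :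
    Integrable (fun ω : ℕ → ℝ => Real.exp (c * ω n + d)) Pm := by
  have h1 : Integrable (fun x : ℝ => Real.exp (c * x + d)) (Pm.map (fun ω : ℕ → ℝ => ω n)) := by
    rw [map_eval Pm hPm n]
    have := (integrable_exp_gaussian c).const_mul (Real.exp d)
    refine this.congr (Eventually.of_forall fun x => ?_)
    simp only [Real.exp_add]
    ring
  exact (integrable_map_measure
    ((by fun_prop : Measurable fun x : ℝ => Real.exp (c * x + d)).aestronglyMeasurable)
    (measurable_pi_apply n).aemeasurable).mp h1

lemma integral_exp_eval (c d : ℝ) (n : ℕ) :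
    ∫ ω : ℕ → ℝ, Real.exp (c * ω n + d) ∂Pm = Real.exp (c ^ 2 / 2 + d) := by
  have h1 : ∫ ω : ℕ → ℝ, Real.exp (c * ω n + d) ∂Pm
      = ∫ x : ℝ, Real.exp (c * x + d) ∂(Pm.map (fun ω : ℕ → ℝ => ω n)) := by
    rw [integral_map (measurable_pi_apply n).aemeasurable
      ((by fun_prop : Measurable fun x : ℝ => Real.exp (c * x + d)).aestronglyMeasurable)]
  rw [h1, map_eval Pm hPm n]
  simp_rw [Real.exp_add, integral_mul_const]
  rw [integral_exp_gaussian c]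

omit hPm

noncomputable def natFilt : Filtration ℕ (inferInstance : MeasurableSpace (ℕ → ℝ)) where
  seq n := MeasurableSpace.comap (fun ω : ℕ → ℝ => fun i : Fin n => ω i) inferInstance
  mono' := by
    intro n m hnm
    have hcomp : (fun ω : ℕ → ℝ => fun i : Fin n => ω i)
        = (fun x : Fin m → ℝ => fun i : Fin n => x (Fin.castLE hnm i))
          ∘ (fun ω (i : Fin m) => ω i) := by
      funext ω i; simp
    dsimp only
    rw [hcomp, ← MeasurableSpace.comap_comp]
    exact MeasurableSpace.comap_mono
      (measurable_iff_comap_le.mp (measurable_pi_lambda _ fun i => measurable_pi_apply _))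
  le' n := measurable_iff_comap_le.mp (measurable_proj n)

lemma natFilt_apply (n : ℕ) :
    natFilt n = MeasurableSpace.comap (fun ω : ℕ → ℝ => fun i : Fin n => ω i)
      inferInstance := rfl

lemma stronglyMeasurable_of_comp (n : ℕ) {g : (Fin n → ℝ) → ℝ} (hg : Measurable g) :
    StronglyMeasurable[natFilt n] (fun ω : ℕ → ℝ => g (fun i : Fin n => ω i)) := by
  have hproj : @Measurable (ℕ → ℝ) (Fin n → ℝ) (natFilt n) _ (fun ω (i : Fin n) => ω i) :=
    measurable_iff_comap_le.mpr le_rfl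
  exact (hg.comp hproj).stronglyMeasurable

lemma measurable_Tf (n : ℕ) : Measurable (Tf a n) := by
  apply Finset.measurable_sum
  intro i _
  fun_prop

lemma stronglyMeasurable_expT (n : ℕ) :
    StronglyMeasurable[natFilt n] (fun ω : ℕ → ℝ => Real.exp (Tf a n ω)) := by
  have hcomp : (fun ω : ℕ → ℝ => Real.exp (Tf a n ω))
      = fun ω : ℕ → ℝ =>
          (fun x : Fin n → ℝ => Real.exp (∑ i : Fin n, (a (i : ℕ) * x i - (a (i : ℕ)) ^ 2 / 2)))
            (fun i : Fin n => ω i) := by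
    funext ω
    rw [Tf, ← Fin.sum_univ_eq_sum_range (fun i => (a i * ω i - (a i) ^ 2 / 2)) n]
  rw [hcomp]
  exact stronglyMeasurable_of_comp n
    (g := fun x : Fin n → ℝ => Real.exp (∑ i : Fin n, (a (i : ℕ) * x i - (a (i : ℕ)) ^ 2 / 2)))
    (by fun_prop)

end PosteriorAuxG

open PosteriorAuxG


/-- Posterior belief in 'change' vanishes under the true status quo measure: if
`∑ aₙ² = ∞`, `P₋ = ⨂ N(0,1)` on `ℕ → ℝ` (characterized by its finite-dimensional
marginals), `π₀ ∈ (0,1)`, and `πₙ = π₀ e^{Sₙ}/(π₀ e^{Sₙ} + 1 − π₀)` with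
`Sₙ(ω) = ∑_{i<n} (aᵢωᵢ − aᵢ²/2)`, then `πₙ → 0` `P₋`-almost surely. -/
theorem posterior_tendsto_zero_of_resolution (a : ℕ → ℝ)
    (hdiv : ¬ Summable (fun n => (a n)^2))
    (Pm : Measure (ℕ → ℝ)) [IsProbabilityMeasure Pm]
    (hPm : ∀ n : ℕ, Measure.map (fun ω (i : Fin n) => ω i) Pm =
      Measure.pi fun _ : Fin n => gaussianReal 0 1)
    (π0 : ℝ) (hπ0 : π0 ∈ Set.Ioo (0:ℝ) 1)
    (S : ℕ → (ℕ → ℝ) → ℝ)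
    (hS : ∀ n ω, S n ω = ∑ i ∈ Finset.range n, (a i * ω i - (a i)^2 / 2))
    (π : ℕ → (ℕ → ℝ) → ℝ)
    (hπ : ∀ n ω, π n ω =
      π0 * Real.exp (S n ω) / (π0 * Real.exp (S n ω) + (1 - π0))) :
    ∀ᵐ ω ∂Pm, Tendsto (fun n => π n ω) atTop (nhds 0) := by
  obtain ⟨hπ0pos, hπ0lt⟩ := hπ0
  set ℱ := natFilt with hFdef
  set L : ℕ → (ℕ → ℝ) → ℝ := fun n ω => Real.exp (Tf a n ω) with hLdef
  have hL1 : ∀ n, Integrable (L n) Pm := by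
    intro n
    have h := integrable_exp_T a Pm hPm 1 n
    simpa [one_mul] using h
  have hLint : ∀ n, ∫ ω, L n ω ∂Pm = 1 := by
    intro n
    have h := integral_exp_T a Pm hPm 1 n
    simpa [one_mul] using h
  have hadapt : ∀ n, StronglyMeasurable[ℱ n] (L n) := fun n => stronglyMeasurable_expT a n
  have hstep : ∀ n, L n =ᵐ[Pm] Pm[L (n + 1)|ℱ n] := by
    intro n
    set X : (ℕ → ℝ) → ℝ := fun ω => Real.exp (a n * ω n + (-(a n) ^ 2 / 2)) with hXdef
    have hLX : L (n + 1) = L n * X := by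
      funext ω
      show Real.exp (Tf a (n + 1) ω) = Real.exp (Tf a n ω) * Real.exp (a n * ω n + (-(a n) ^ 2 / 2))
      rw [Tf, Finset.sum_range_succ, Real.exp_add]
      congr 2
      ring
    have hXint : Integrable X Pm := integrable_exp_eval Pm hPm (a n) (-(a n) ^ 2 / 2) n
    have hXexp : ∫ ω, X ω ∂Pm = 1 := by
      rw [hXdef, integral_exp_eval Pm hPm (a n) (-(a n) ^ 2 / 2) n,
        show (a n) ^ 2 / 2 + -(a n) ^ 2 / 2 = 0 by ring, Real.exp_zero]
    have hXmeas : StronglyMeasurable[MeasurableSpace.comap (fun ω : ℕ → ℝ => ω n)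
        inferInstance] X := by
      have hev : @Measurable (ℕ → ℝ) ℝ
          (MeasurableSpace.comap (fun ω : ℕ → ℝ => ω n) inferInstance) _ (fun ω => ω n) :=
        measurable_iff_comap_le.mpr le_rfl
      exact ((by fun_prop :
        Measurable fun x : ℝ => Real.exp (a n * x + (-(a n) ^ 2 / 2))).comp hev).stronglyMeasurable
    have hindep : Indep (MeasurableSpace.comap (fun ω : ℕ → ℝ => ω n) inferInstance)
        (ℱ n) Pm := by
      have h := (indep_proj_eval Pm hPm n).symm
      rw [IndepFun_iff_Indep] at h
      exact h
    have hXcond : Pm[X|ℱ n] =ᵐ[Pm] fun _ => ∫ ω, X ω ∂Pm :=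
      condExp_indep_eq (measurable_iff_comap_le.mp (measurable_pi_apply n)) (ℱ.le n)
        hXmeas hindep
    refine EventuallyEq.symm ?_
    calc Pm[L (n + 1)|ℱ n] = Pm[L n * X|ℱ n] := by rw [hLX]
      _ =ᵐ[Pm] L n * Pm[X|ℱ n] :=
          condExp_mul_of_stronglyMeasurable_left (hadapt n) (hLX ▸ hL1 (n + 1)) hXint
      _ =ᵐ[Pm] L n := by
          filter_upwards [hXcond] with ω hω
          simp only [Pi.mul_apply, hω, hXexp, mul_one]
  have hmart : Martingale L ℱ Pm := martingale_nat hadapt hL1 hstep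
  have hbdd : ∀ n, eLpNorm (L n) 1 Pm ≤ ((1 : ℝ≥0) : ℝ≥0∞) := by
    intro n
    rw [eLpNorm_one_eq_lintegral_enorm]
    have h1 : ∫⁻ ω, ‖L n ω‖ₑ ∂Pm = ENNReal.ofReal (∫ ω, L n ω ∂Pm) := by
      rw [ofReal_integral_eq_lintegral_ofReal (hL1 n)
        (Eventually.of_forall fun ω => Real.exp_nonneg _)]
      exact lintegral_congr fun ω => Real.enorm_eq_ofReal (Real.exp_nonneg _)
    rw [h1, hLint n]
    simp
  have htend := hmart.submartingale.ae_tendsto_limitProcess hbdd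
  set Z := ℱ.limitProcess L Pm with hZdef
  have hZmeas : Measurable Z :=
    (Filtration.stronglyMeasurable_limit_process').measurable
  have hv : Tendsto (fun n => ∑ i ∈ Finset.range n, (a i) ^ 2) atTop atTop :=
    (not_summable_iff_tendsto_nat_atTop_of_nonneg (fun n => sq_nonneg (a n))).mp hdiv
  have hWint : ∀ n, Integrable (fun ω => Real.exp ((1/2) * Tf a n ω)) Pm := fun n =>
    integrable_exp_T a Pm hPm (1/2) n
  have hWval : ∀ n, ∫ ω, Real.exp ((1/2) * Tf a n ω) ∂Pm
      = Real.exp (-(∑ i ∈ Finset.range n, (a i) ^ 2) / 8) := by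
    intro n
    rw [integral_exp_T a Pm hPm (1/2) n]
    congr 1
    ring
  have hmW : ∀ n, Measurable fun ω => ENNReal.ofReal (Real.exp ((1/2) * Tf a n ω)) := fun n =>
    (Real.measurable_exp.comp ((measurable_Tf a n).const_mul _)).ennreal_ofReal
  have hfatou : ∫⁻ ω, ENNReal.ofReal (Real.sqrt (Z ω)) ∂Pm = 0 := by
    have hle : ∫⁻ ω, ENNReal.ofReal (Real.sqrt (Z ω)) ∂Pm
        ≤ liminf (fun n => ∫⁻ ω, ENNReal.ofReal (Real.exp ((1/2) * Tf a n ω)) ∂Pm) atTop := by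
      refine le_trans ?_ (lintegral_liminf_le hmW)
      refine lintegral_mono_ae ?_
      filter_upwards [htend] with ω hω
      have h3 : Tendsto (fun n => Real.exp ((1/2) * Tf a n ω)) atTop (nhds (Real.sqrt (Z ω))) := by
        have h4 : ∀ n, Real.exp ((1/2) * Tf a n ω) = Real.sqrt (L n ω) := by
          intro n
          rw [show (1/2 : ℝ) * Tf a n ω = Tf a n ω / 2 by ring, Real.exp_half]
        simp_rw [h4]
        exact (Real.continuous_sqrt.tendsto _).comp hω
      have h2 : Tendsto (fun n => ENNReal.ofReal (Real.exp ((1/2) * Tf a n ω))) atTop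
          (nhds (ENNReal.ofReal (Real.sqrt (Z ω)))) :=
        (ENNReal.continuous_ofReal.tendsto _).comp h3
      rw [← h2.liminf_eq]
    have heq : (fun n => ∫⁻ ω, ENNReal.ofReal (Real.exp ((1/2) * Tf a n ω)) ∂Pm)
        = fun n => ENNReal.ofReal (Real.exp (-(∑ i ∈ Finset.range n, (a i) ^ 2) / 8)) := by
      funext n
      rw [← ofReal_integral_eq_lintegral_ofReal (hWint n)
        (Eventually.of_forall fun ω => Real.exp_nonneg _), hWval n]
    rw [heq] at hle
    have h0 : Tendsto (fun n => ENNReal.ofReal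
        (Real.exp (-(∑ i ∈ Finset.range n, (a i) ^ 2) / 8))) atTop (nhds 0) := by
      rw [← ENNReal.ofReal_zero]
      refine (ENNReal.continuous_ofReal.tendsto _).comp ?_
      refine Real.tendsto_exp_atBot.comp ?_
      have h5 : Tendsto (fun n => (∑ i ∈ Finset.range n, (a i) ^ 2) / 8) atTop atTop :=
        hv.atTop_div_const (by norm_num)
      have h6 := tendsto_neg_atTop_atBot.comp h5
      refine h6.congr fun n => ?_
      simp [neg_div]
    rw [h0.liminf_eq] at hle
    exact le_antisymm hle zero_le
  have hZero : ∀ᵐ ω ∂Pm, Z ω = 0 := by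
    have h1 := (lintegral_eq_zero_iff
      ((Real.continuous_sqrt.measurable.comp hZmeas).ennreal_ofReal)).mp hfatou
    filter_upwards [h1, htend] with ω h2 h3
    have h4 : Real.sqrt (Z ω) ≤ 0 := by
      have : ENNReal.ofReal (Real.sqrt (Z ω)) = 0 := h2
      rwa [ENNReal.ofReal_eq_zero] at this
    have h5 : Z ω ≤ 0 := Real.sqrt_eq_zero'.mp (le_antisymm h4 (Real.sqrt_nonneg _))
    have h6 : 0 ≤ Z ω := ge_of_tendsto h3 (Eventually.of_forall fun n => Real.exp_nonneg _)
    linarith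
  filter_upwards [htend, hZero] with ω hω hz
  rw [hz] at hω
  have hπω : (fun n => π n ω) = fun n => π0 * L n ω / (π0 * L n ω + (1 - π0)) := by
    funext n
    rw [hπ n ω, hS n ω]
    rfl
  rw [hπω]
  have h1 : Tendsto (fun n => π0 * L n ω) atTop (nhds 0) := by
    simpa using hω.const_mul π0
  have h2 : Tendsto (fun n => π0 * L n ω + (1 - π0)) atTop (nhds (1 - π0)) := by
    simpa using h1.add_const (1 - π0)
  have h3 := h1.div h2 (by linarith)
  rw [zero_div] at h3
  exact h3
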